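/- Let x*, x₀ ∈ ℝ² with x₀ ≠ x*, g ∈ ℝ², and σ > 0. There exists a symmetric matrix P ∈ ℝ^{2×2} with minimum eigenvalue exactly σ such that P(x₀ - x*) = g, if and only if ‖x₀ - x*‖ ≤ ‖g‖/σ and either g is a positive multiple of x₀ - x* or ⟨g, x₀ - x*⟩ > σ‖x₀ - x*‖². -/

import Mathlib

open Matrix

lemma app2 (P : Matrix (Fin 2) (Fin 2) ℝ) (v : EuclideanSpace ℝ (Fin 2)) (i : Fin 2) :
    Matrix.toEuclideanLin P v i = P i 0 * v 0 + P i 1 * v 1 := by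
  simp [Matrix.toEuclideanLin_apply, Matrix.mulVec, dotProduct, Fin.sum_univ_two]
  fin_cases i <;> simp

lemma inn2 (v w : EuclideanSpace ℝ (Fin 2)) : (inner ℝ v w : ℝ) = v 0 * w 0 + v 1 * w 1 := by
  simp [PiLp.inner_apply, Fin.sum_univ_two]
  ring

lemma nsq2 (v : EuclideanSpace ℝ (Fin 2)) : ‖v‖^2 = v 0 ^2 + v 1^2 := by
  rw [← real_inner_self_eq_norm_sq, inn2]; ring

noncomputable def mk2 (a b : ℝ) : EuclideanSpace ℝ (Fin 2) := (WithLp.equiv 2 _).symm ![a,b]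

lemma mk2_0 (a b : ℝ) : mk2 a b 0 = a := rfl
lemma mk2_1 (a b : ℝ) : mk2 a b 1 = b := rfl

lemma eq2 (v w : EuclideanSpace ℝ (Fin 2)) (h0 : v 0 = w 0) (h1 : v 1 = w 1) : v = w := by
  ext i; fin_cases i <;> assumption

lemma smul2 (c : ℝ) (v : EuclideanSpace ℝ (Fin 2)) (i : Fin 2) : (c • v) i = c * v i := rfl

lemma ne2 (a b : ℝ) (h : a ≠ 0 ∨ b ≠ 0) : mk2 a b ≠ 0 := by
  intro hz
  have e0 : mk2 a b 0 = (0 : EuclideanSpace ℝ (Fin 2)) 0 := by rw [hz]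
  have e1 : mk2 a b 1 = (0 : EuclideanSpace ℝ (Fin 2)) 1 := by rw [hz]
  rw [mk2_0] at e0; rw [mk2_1] at e1
  simp only [show (0 : EuclideanSpace ℝ (Fin 2)) 0 = 0 from rfl,
    show (0 : EuclideanSpace ℝ (Fin 2)) 1 = 0 from rfl] at e0 e1
  rcases h with h | h
  · exact h e0
  · exact h e1

lemma symm2 (p q r : ℝ) : (!![p, q; q, r] : Matrix (Fin 2) (Fin 2) ℝ).IsSymm := by
  ext i j; fin_cases i <;> fin_cases j <;> rfl

lemma tEL0 (p q r s : ℝ) (v : EuclideanSpace ℝ (Fin 2)) :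
    Matrix.toEuclideanLin (!![p, q; r, s] : Matrix (Fin 2) (Fin 2) ℝ) v 0
      = p * v 0 + q * v 1 := by
  rw [app2]; simp

lemma tEL1 (p q r s : ℝ) (v : EuclideanSpace ℝ (Fin 2)) :
    Matrix.toEuclideanLin (!![p, q; r, s] : Matrix (Fin 2) (Fin 2) ℝ) v 1
      = r * v 0 + s * v 1 := by
  rw [app2]; simp

set_option maxHeartbeats 2000000 in
/-- Let `x*, x₀ ∈ ℝ²` with `x₀ ≠ x*`, `g ∈ ℝ²`, `σ > 0`.  There exists a
symmetric matrix `P ∈ ℝ^{2×2}` with minimum eigenvalue exactly `σ` (i.e. `P ⪰ σI` and `σ`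
is an eigenvalue of `P`) such that `P(x₀ - x*) = g`, if and only if
`‖x₀ - x*‖ ≤ ‖g‖/σ` and either `g` is a positive multiple of `x₀ - x*` or
`⟨g, x₀ - x*⟩ > σ‖x₀ - x*‖²`. -/
theorem stmt_14 (xs x₀ g : EuclideanSpace ℝ (Fin 2)) (hne : x₀ ≠ xs) (σ : ℝ) (hσ : 0 < σ) :
    (∃ P : Matrix (Fin 2) (Fin 2) ℝ, P.IsSymm ∧
        (∀ v : EuclideanSpace ℝ (Fin 2),
          σ * ‖v‖ ^ 2 ≤ (inner ℝ (Matrix.toEuclideanLin P v) v : ℝ)) ∧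
        (∃ v : EuclideanSpace ℝ (Fin 2), v ≠ 0 ∧ Matrix.toEuclideanLin P v = σ • v) ∧
        Matrix.toEuclideanLin P (x₀ - xs) = g) ↔
      (‖x₀ - xs‖ ≤ ‖g‖ / σ ∧
        ((∃ k : ℝ, 0 < k ∧ g = k • (x₀ - xs)) ∨
          σ * ‖x₀ - xs‖ ^ 2 < (inner ℝ g (x₀ - xs) : ℝ))) := by
  set d : EuclideanSpace ℝ (Fin 2) := x₀ - xs with hd_def
  have hd : d ≠ 0 := sub_ne_zero.mpr hne
  have hdpos : 0 < ‖d‖ := norm_pos_iff.mpr hd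
  have hd2 : 0 < d 0 ^ 2 + d 1 ^ 2 := by rw [← nsq2]; positivity
  constructor
  · rintro ⟨P, hsym, hpsd, ⟨w, hw0, hw⟩, hPd⟩
    have h1 : σ * ‖d‖ ^ 2 ≤ (inner ℝ g d : ℝ) := by
      have := hpsd d; rwa [hPd] at this
    have h2 : (inner ℝ g d : ℝ) ≤ ‖g‖ * ‖d‖ := real_inner_le_norm g d
    have hnorm : ‖d‖ ≤ ‖g‖ / σ := by
      rw [le_div_iff₀ hσ]; nlinarith
    refine ⟨hnorm, ?_⟩
    rcases lt_or_eq_of_le h1 with hlt | heq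
    · exact Or.inr hlt
    · -- equality case: g = σ • d
      left
      refine ⟨σ, hσ, ?_⟩
      obtain ⟨a, ha⟩ : ∃ a, P 0 0 = a := ⟨_, rfl⟩
      obtain ⟨b, hb⟩ : ∃ b, P 0 1 = b := ⟨_, rfl⟩
      obtain ⟨e, he⟩ : ∃ e, P 1 1 = e := ⟨_, rfl⟩
      have hcb : P 1 0 = b := by
        have := congrFun (congrFun hsym 1) 0
        rw [Matrix.transpose_apply] at this
        rw [← this, hb]
      have hg0 : a * d 0 + b * d 1 = g 0 := by
        have h : Matrix.toEuclideanLin P d 0 = g 0 := by rw [hPd]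
        rw [app2, ha, hb] at h; exact h
      have hg1 : b * d 0 + e * d 1 = g 1 := by
        have h : Matrix.toEuclideanLin P d 1 = g 1 := by rw [hPd]
        rw [app2, hcb, he] at h; exact h
      have hq : ∀ v0 v1 : ℝ,
          0 ≤ (a - σ) * v0 ^ 2 + 2 * b * v0 * v1 + (e - σ) * v1 ^ 2 := by
        intro v0 v1
        have h := hpsd (mk2 v0 v1)
        rw [inn2, nsq2, app2, app2, ha, hb, hcb, he] at h
        rw [mk2_0, mk2_1] at h
        nlinarith [h]
      have hqd : (a - σ) * (d 0) ^ 2 + 2 * b * (d 0) * (d 1) + (e - σ) * (d 1) ^ 2 = 0 := by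
        rw [inn2, nsq2] at heq
        rw [← hg0, ← hg1] at heq
        nlinarith [heq]
      obtain ⟨L, hL⟩ : ∃ L, (a - σ) * d 0 + b * d 1 = L := ⟨_, rfl⟩
      obtain ⟨M, hM⟩ : ∃ M, b * d 0 + (e - σ) * d 1 = M := ⟨_, rfl⟩
      obtain ⟨s, hs⟩ : ∃ s, L ^ 2 + M ^ 2 = s := ⟨_, rfl⟩
      obtain ⟨Q, hQ⟩ : ∃ Q, (a - σ) * L ^ 2 + 2 * b * L * M + (e - σ) * M ^ 2 = Q := ⟨_, rfl⟩
      have hQ0 : 0 ≤ Q := hQ ▸ hq L M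
      have hsnn : 0 ≤ s := by rw [← hs]; positivity
      have key : ∀ t : ℝ, 0 ≤ 2 * t * s + t ^ 2 * Q := by
        intro t
        have h := hq (d 0 + t * L) (d 1 + t * M)
        have hexp : (a - σ) * (d 0 + t * L) ^ 2 + 2 * b * (d 0 + t * L) * (d 1 + t * M)
            + (e - σ) * (d 1 + t * M) ^ 2
            = ((a - σ) * (d 0) ^ 2 + 2 * b * (d 0) * (d 1) + (e - σ) * (d 1) ^ 2)
              + 2 * t * s + t ^ 2 * Q := by
          rw [← hs, ← hQ, ← hL, ← hM]; ring
        rw [hexp, hqd] at h; linarith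
      have hs0 : s = 0 := by
        have hQ1 : (0:ℝ) < Q + 1 := by linarith
        have hp2 : (0:ℝ) < (Q + 1) ^ 2 := by positivity
        have h := key (-(s) / (Q + 1))
        have hid : 2 * (-(s) / (Q + 1)) * s + (-(s) / (Q + 1)) ^ 2 * Q
            = (s ^ 2 * Q - 2 * s ^ 2 * (Q + 1)) / (Q + 1) ^ 2 := by
          field_simp; ring
        rw [hid] at h
        have h2 : 0 ≤ s ^ 2 * Q - 2 * s ^ 2 * (Q + 1) := by
          have := mul_le_mul_of_nonneg_right h (le_of_lt hp2)
          rw [zero_mul, div_mul_cancel₀ _ (ne_of_gt hp2)] at this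
          exact this
        have hsq : s ^ 2 ≤ 0 := by nlinarith [sq_nonneg s]
        have : s ^ 2 = 0 := le_antisymm hsq (sq_nonneg s)
        exact pow_eq_zero_iff (by norm_num : (2:ℕ) ≠ 0) |>.mp this
      have hL0 : L = 0 := by nlinarith [sq_nonneg L, sq_nonneg M]
      have hM0 : M = 0 := by nlinarith [sq_nonneg L, sq_nonneg M]
      refine (eq2 g (σ • d) ?_ ?_)
      · rw [smul2]; rw [hL0] at hL; linarith [hg0, hL]
      · rw [smul2]; rw [hM0] at hM; linarith [hg1, hM]
  · rintro ⟨hnorm, hcase⟩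
    by_cases hgt : σ * ‖d‖ ^ 2 < (inner ℝ g d : ℝ)
    · -- rank-one update construction
      obtain ⟨h0, hh0⟩ : ∃ h0, g 0 - σ * d 0 = h0 := ⟨_, rfl⟩
      obtain ⟨h1, hh1⟩ : ∃ h1, g 1 - σ * d 1 = h1 := ⟨_, rfl⟩
      obtain ⟨τ, hτ⟩ : ∃ τ, h0 * d 0 + h1 * d 1 = τ := ⟨_, rfl⟩
      have hτpos : 0 < τ := by
        rw [inn2, nsq2] at hgt
        rw [← hτ, ← hh0, ← hh1]; nlinarith
      have hτne : τ ≠ 0 := ne_of_gt hτpos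
      refine ⟨!![σ + h0 * h0 / τ, h0 * h1 / τ; h0 * h1 / τ, σ + h1 * h1 / τ],
        symm2 _ _ _, ?_, ?_, ?_⟩
      · intro v
        rw [inn2, nsq2]
        rw [show ∀ i, (Matrix.toEuclideanLin
            !![σ + h0 * h0 / τ, h0 * h1 / τ; h0 * h1 / τ, σ + h1 * h1 / τ] v) i
            = (Matrix.toEuclideanLin _ v) i from fun i => rfl]
        rw [tEL0, tEL1]
        have key : (σ + h0 * h0 / τ) * v 0 ^ 2 + (h0 * h1 / τ) * v 1 * v 0
            + ((h0 * h1 / τ) * v 0 + (σ + h1 * h1 / τ) * v 1) * v 1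
            = σ * (v 0 ^ 2 + v 1 ^ 2) + (h0 * v 0 + h1 * v 1) ^ 2 / τ := by
          field_simp; ring
        have hnn : 0 ≤ (h0 * v 0 + h1 * v 1) ^ 2 / τ :=
          div_nonneg (sq_nonneg _) (le_of_lt hτpos)
        nlinarith [key, hnn]
      · have hh : h0 ≠ 0 ∨ h1 ≠ 0 := by
          by_contra hcon
          push_neg at hcon
          rw [hcon.1, hcon.2] at hτ
          simp at hτ; rw [← hτ] at hτpos; exact lt_irrefl 0 hτpos
        refine ⟨mk2 (-h1) h0, ne2 _ _ ?_, ?_⟩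
        · rcases hh with h | h
          · exact Or.inr h
          · exact Or.inl (by simpa using h)
        · refine eq2 _ _ ?_ ?_
          · rw [tEL0, smul2, mk2_0, mk2_1]
            field_simp; ring
          · rw [tEL1, smul2, mk2_0, mk2_1]
            field_simp; ring
      · refine eq2 _ _ ?_ ?_
        · rw [tEL0]
          rw [← hh0, ← hh1] at hτ ⊢
          field_simp
          linear_combination (g 0 - σ * d 0) * hτ
        · rw [tEL1]
          rw [← hh0, ← hh1] at hτ ⊢
          field_simp
          linear_combination (g 1 - σ * d 1) * hτ
    · -- g must equal σ • d ; take P = σ I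
      have hk : g = σ • d := by
        rcases hcase with ⟨k, hkpos, hgk⟩ | hlt
        · have hgn : ‖g‖ = k * ‖d‖ := by
            rw [hgk, norm_smul, Real.norm_eq_abs, abs_of_pos hkpos]
          rw [le_div_iff₀ hσ, hgn] at hnorm
          have hkσ : σ ≤ k := by nlinarith
          have hinn : (inner ℝ g d : ℝ) = k * ‖d‖ ^ 2 := by
            rw [hgk, real_inner_smul_left, real_inner_self_eq_norm_sq]
          push_neg at hgt
          rw [hinn] at hgt
          have hkσ' : k ≤ σ := by nlinarith [pow_pos hdpos 2]
          have : k = σ := le_antisymm hkσ' hkσ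
          rw [hgk, this]
        · exact absurd hlt hgt
      refine ⟨!![σ, 0; 0, σ], symm2 _ _ _, ?_, ?_, ?_⟩
      · intro v
        rw [inn2, nsq2, tEL0, tEL1]
        nlinarith [sq_nonneg (v 0), sq_nonneg (v 1)]
      · refine ⟨d, hd, eq2 _ _ ?_ ?_⟩
        · rw [tEL0, smul2]; ring
        · rw [tEL1, smul2]; ring
      · rw [hk]
        refine eq2 _ _ ?_ ?_
        · rw [tEL0, smul2]; ring
        · rw [tEL1, smul2]; ring
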